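/- arXiv:math/0409545 — 2 statements merged into one kernel-verified Lean document; each statement's English description precedes it below -/
import Mathlib

section
/- Assume in addition that ν is a finite measure. Then for every real number θ with θ − 1 > p̲ there exists γ > 1 such that ∫_S (Σ_{i≥1} s_i^{θ})^{γ} ν(ds) < ∞. -/
open MeasureTheory Real Set Filter

noncomputable section

/-- Real power with the convention `0 ^ r = 0` for every exponent `r`. -/
def pw (x r : ℝ) : ℝ := if x = 0 then 0 else x ^ r

/-- The state space `S` of ranked mass configurations: nonincreasing nonnegative
sequences with total sum at most `1` (sum condition stated via partial sums). -/
def inS (s : ℕ → ℝ) : Prop :=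
  (∀ i, 0 ≤ s i) ∧ (∀ i, s (i + 1) ≤ s i) ∧ ∀ F : Finset ℕ, ∑ i ∈ F, s i ≤ 1

/-- The configuration `(1, 0, 0, …)`. -/
def oneConf : ℕ → ℝ := fun i => if i = 0 then 1 else 0

/-- A dislocation measure: a measure on sequences, carried by `S`, giving no mass
to `(1,0,…)`, integrating `1 - s₁`, and conserving total mass (carried by
configurations with `Σ sᵢ = 1`). -/
structure IsDislocation (ν : Measure (ℕ → ℝ)) : Prop where
  carried : ν {s | ¬ (inS s ∧ HasSum s 1)} = 0
  no_one : ν {oneConf} = 0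
  int_one_sub : ∫⁻ s, ENNReal.ofReal (1 - s 0) ∂ν < ⊤

/-- `p̲ := inf {p ∈ ℝ : ∫_S Σ_{i≥2} sᵢ^{p+1} ν(ds) < ∞}`, as an extended real
(possibly `-∞`, and `+∞` if no `p` qualifies). -/
def pLow (ν : Measure (ℕ → ℝ)) : EReal :=
  sInf {x : EReal | ∃ p : ℝ, x = (p : EReal) ∧
    ∫⁻ s, ∑' i, ENNReal.ofReal (pw (s (i + 1)) (p + 1)) ∂ν < ⊤}

open scoped ENNReal

lemma measurable_pw (r : ℝ) : Measurable fun x : ℝ => pw x r := by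
  unfold pw
  exact Measurable.ite measurableSet_eq measurable_const
    (measurable_id.pow measurable_const)

lemma jensen_tsum (a x : ℕ → ℝ≥0∞) (ha : ∑' i, a i ≤ 1) {γ : ℝ} (hγ : 1 < γ) :
    (∑' i, a i * x i) ^ γ ≤ ∑' i, a i * x i ^ γ := by
  have hγ0 : (0:ℝ) < γ := lt_trans one_pos hγ
  set γ' : ℝ := γ / (γ - 1) with hγ'def
  have hpq : γ'.HolderConjugate γ := (Real.HolderConjugate.conjExponent hγ).symm
  have hatop : ∀ i, a i ≠ ⊤ := fun i =>
    ne_top_of_le_ne_top ENNReal.one_ne_top ((ENNReal.le_tsum i).trans ha)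
  have key := ENNReal.lintegral_mul_le_Lp_mul_Lq Measure.count hpq
      (f := fun i => a i ^ (1/γ')) (g := fun i => a i ^ (1/γ) * x i)
      measurable_from_top.aemeasurable measurable_from_top.aemeasurable
  rw [lintegral_count, lintegral_count, lintegral_count] at key
  have hfg : ∀ i : ℕ, ((fun i => a i ^ (1/γ')) * fun i => a i ^ (1/γ) * x i) i
      = a i * x i := by
    intro i
    rcases eq_or_ne (a i) 0 with h0 | h0
    · simp only [Pi.mul_apply, h0, ENNReal.zero_rpow_of_pos hpq.one_div_pos,
        ENNReal.zero_rpow_of_pos hpq.symm.one_div_pos, zero_mul, mul_zero]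
    · show a i ^ (1/γ') * (a i ^ (1/γ) * x i) = a i * x i
      rw [← mul_assoc, ← ENNReal.rpow_add _ _ h0 (hatop i), one_div, one_div,
        hpq.inv_add_inv_eq_one, ENNReal.rpow_one]
  have hf' : ∀ i : ℕ, (fun i => a i ^ (1/γ')) i ^ γ' = a i := by
    intro i
    show (a i ^ (1/γ')) ^ γ' = a i
    rw [← ENNReal.rpow_mul, one_div, inv_mul_cancel₀ hpq.ne_zero, ENNReal.rpow_one]
  have hg' : ∀ i : ℕ, (fun i => a i ^ (1/γ) * x i) i ^ γ = a i * x i ^ γ := by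
    intro i
    show (a i ^ (1/γ) * x i) ^ γ = a i * x i ^ γ
    rw [ENNReal.mul_rpow_of_nonneg _ _ hγ0.le, ← ENNReal.rpow_mul, one_div,
      inv_mul_cancel₀ hγ0.ne', ENNReal.rpow_one]
  rw [tsum_congr hfg, tsum_congr hf', tsum_congr hg'] at key
  have h1 : (∑' i, a i) ^ (1/γ') ≤ 1 := by
    calc (∑' i, a i) ^ (1/γ') ≤ (1:ℝ≥0∞) ^ (1/γ') :=
          ENNReal.rpow_le_rpow ha hpq.one_div_nonneg
    _ = 1 := ENNReal.one_rpow _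
  have key2 : (∑' i, a i * x i) ≤ (∑' i, a i * x i ^ γ) ^ (1/γ) := by
    calc (∑' i, a i * x i) ≤ (∑' i, a i) ^ (1/γ') * (∑' i, a i * x i ^ γ) ^ (1/γ) := key
    _ ≤ 1 * (∑' i, a i * x i ^ γ) ^ (1/γ) := by gcongr
    _ = (∑' i, a i * x i ^ γ) ^ (1/γ) := one_mul _
  calc (∑' i, a i * x i) ^ γ ≤ ((∑' i, a i * x i ^ γ) ^ (1/γ)) ^ γ :=
        ENNReal.rpow_le_rpow key2 hγ0.le
  _ = ∑' i, a i * x i ^ γ := by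
      rw [← ENNReal.rpow_mul, one_div, inv_mul_cancel₀ hγ0.ne', ENNReal.rpow_one]

/-- `Φ(q) := ∫_S (1 - Σ_{i≥1} sᵢ^{q+1}) ν(ds)`. -/
def Phi (ν : Measure (ℕ → ℝ)) (q : ℝ) : ℝ :=
  ∫ s, (1 - ∑' i, pw (s i) (q + 1)) ∂ν

/-- If moreover `ν` is a finite measure, then for every `θ` with `θ - 1 > p̲`
there exists `γ > 1` with `∫_S (Σ_{i≥1} sᵢ^θ)^γ ν(ds) < ∞`. -/
theorem moment_gamma_finite (ν : Measure (ℕ → ℝ)) (hν : IsDislocation ν)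
    [IsFiniteMeasure ν] (θ : ℝ) (hθ : pLow ν < ((θ - 1 : ℝ) : EReal)) :
    ∃ γ : ℝ, 1 < γ ∧
      ∫⁻ s, (∑' i, ENNReal.ofReal (pw (s i) θ)) ^ γ ∂ν < ⊤ := by
  -- extract p with p < θ - 1 and finite integral
  obtain ⟨x, hxA, hxlt⟩ := sInf_lt_iff.mp hθ
  obtain ⟨p, rfl, hp_int⟩ := hxA
  have hpθ : p < θ - 1 := by exact_mod_cast hxlt
  -- choose γ
  set γ : ℝ := if 0 ≤ θ - 1 then 2 else (1 + p / (θ - 1)) / 2 with hγdef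
  have hγ1 : 1 < γ := by
    rw [hγdef]
    split_ifs with h
    · norm_num
    · push_neg at h
      have hr : 1 < p / (θ - 1) := (one_lt_div_of_neg h).mpr hpθ
      linarith
  have hγ0 : (0:ℝ) < γ := lt_trans one_pos hγ1
  set q : ℝ := γ * (θ - 1) with hqdef
  have hpq' : p ≤ q := by
    rw [hqdef, hγdef]
    split_ifs with h
    · nlinarith
    · push_neg at h
      have hr : 1 < p / (θ - 1) := (one_lt_div_of_neg h).mpr hpθ
      have hpe : p = p / (θ - 1) * (θ - 1) := (div_mul_cancel₀ _ (ne_of_lt h)).symm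
      nlinarith
  -- the tail function X
  set X : (ℕ → ℝ) → ℝ≥0∞ := fun s => ∑' i, ENNReal.ofReal (pw (s (i + 1)) (p + 1))
    with hXdef
  have hXmeas : Measurable X :=
    Measurable.ennreal_tsum fun i =>
      (ENNReal.measurable_ofReal.comp ((measurable_pw (p+1)).comp (measurable_pi_apply (i+1))))
  -- a.e. we are on the carrier minus the point mass
  have hE : ∀ᵐ s ∂ν, (inS s ∧ HasSum s 1) ∧ s ≠ oneConf := by
    have h1 : ∀ᵐ s ∂ν, inS s ∧ HasSum s 1 := by
      rw [ae_iff]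
      simpa using hν.carried
    have h2 : ∀ᵐ s ∂ν, s ≠ oneConf := by
      rw [ae_iff]
      simpa [not_not, Set.setOf_eq_eq_singleton] using hν.no_one
    filter_upwards [h1, h2] with s hs hne using ⟨hs, hne⟩
  -- pointwise bound
  have hpt : ∀ᵐ s ∂ν, (∑' i, ENNReal.ofReal (pw (s i) θ)) ^ γ ≤ 1 + (X s + X s) := by
    filter_upwards [hE] with s hs
    obtain ⟨⟨⟨hnn, hmono, hsum⟩, hhs⟩, hne⟩ := hs
    have hle1 : ∀ i, s i ≤ 1 := by
      intro i
      have := hsum {i}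
      simpa using this
    -- s 1 > 0
    have hs1pos : 0 < s 1 := by
      rcases lt_or_eq_of_le (hnn 1) with h | h
      · exact h
      · exfalso
        apply hne
        have hz : ∀ i, i ≠ 0 → s i = 0 := by
          have key : ∀ i, s (i + 1) ≤ s 1 := by
            intro i
            induction i with
            | zero => exact le_refl _
            | succ n ih => exact le_trans (hmono (n+1)) ih
          intro i hi
          obtain ⟨j, rfl⟩ := Nat.exists_eq_succ_of_ne_zero hi
          exact le_antisymm (h ▸ key j) (hnn _)
        have h0 : HasSum s (s 0) := hasSum_single 0 (fun b hb => hz b hb)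
        have hs0 : s 0 = 1 := h0.unique hhs
        funext i
        cases i with
        | zero => simpa [oneConf] using hs0
        | succ n => simpa [oneConf] using hz (n+1) (Nat.succ_ne_zero n)
    have hs0pos : 0 < s 0 := lt_of_lt_of_le hs1pos (hmono 0)
    -- tsum of weights ≤ 1
    have ha : ∑' i, ENNReal.ofReal (s i) ≤ 1 := by
      have : ∑' i, ENNReal.ofReal (s i) = 1 := by
        rw [← ENNReal.ofReal_tsum_of_nonneg hnn hhs.summable, hhs.tsum_eq,
          ENNReal.ofReal_one]
      exact this.le
    -- rewrite the θ-sum as weighted sum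
    have step1 : (∑' i, ENNReal.ofReal (pw (s i) θ))
        = ∑' i, ENNReal.ofReal (s i) * ENNReal.ofReal (pw (s i) (θ - 1)) := by
      refine tsum_congr fun i => ?_
      rcases eq_or_lt_of_le (hnn i) with h | h
      · simp [pw, ← h]
      · rw [← ENNReal.ofReal_mul (hnn i)]
        congr 1
        simp only [pw, if_neg (ne_of_gt h)]
        have hx : s i ^ θ = s i ^ (1:ℝ) * s i ^ (θ - 1) := by
          rw [← Real.rpow_add h]; norm_num
        rw [hx, Real.rpow_one]
    -- Jensen
    have hJ := jensen_tsum (fun i => ENNReal.ofReal (s i))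
      (fun i => ENNReal.ofReal (pw (s i) (θ - 1))) ha hγ1
    -- identify the RHS of Jensen
    have step2 : ∀ i, ENNReal.ofReal (s i) * ENNReal.ofReal (pw (s i) (θ - 1)) ^ γ
        = ENNReal.ofReal (pw (s i) (q + 1)) := by
      intro i
      rcases eq_or_lt_of_le (hnn i) with h | h
      · simp [pw, ← h, ENNReal.zero_rpow_of_pos hγ0]
      · simp only [pw, if_neg (ne_of_gt h)]
        rw [ENNReal.ofReal_rpow_of_pos (Real.rpow_pos_of_pos h _),
          ← Real.rpow_mul (le_of_lt h), ← ENNReal.ofReal_mul (le_of_lt h)]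
        congr 1
        have hx : s i ^ (q + 1) = s i ^ (1:ℝ) * s i ^ ((θ - 1) * γ) := by
          rw [← Real.rpow_add h]
          congr 1
          rw [hqdef]; ring
        rw [hx, Real.rpow_one]
    have step3 : (∑' i, ENNReal.ofReal (pw (s i) (q+1)))
        = ENNReal.ofReal (pw (s 0) (q+1)) + ∑' i, ENNReal.ofReal (pw (s (i+1)) (q+1)) :=
      tsum_eq_zero_add' ENNReal.summable
    have step4 : (∑' i, ENNReal.ofReal (pw (s (i+1)) (q+1))) ≤ X s := by
      refine ENNReal.tsum_le_tsum fun i => ?_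
      refine ENNReal.ofReal_le_ofReal ?_
      rcases eq_or_lt_of_le (hnn (i+1)) with h | h
      · simp [pw, ← h]
      · simp only [pw, if_neg (ne_of_gt h)]
        exact Real.rpow_le_rpow_of_exponent_ge h (hle1 _) (by linarith)
    have step5 : ENNReal.ofReal (pw (s 0) (q+1)) ≤ 1 + X s := by
      by_cases hq1 : 0 ≤ q + 1
      · have hb : pw (s 0) (q+1) ≤ 1 := by
          simp only [pw, if_neg (ne_of_gt hs0pos)]
          exact Real.rpow_le_one (hnn 0) (hle1 0) hq1
        calc ENNReal.ofReal (pw (s 0) (q+1)) ≤ 1 := by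
              simpa using ENNReal.ofReal_le_ofReal hb
        _ ≤ 1 + X s := le_self_add
      · push_neg at hq1
        have h1 : pw (s 0) (q+1) ≤ pw (s 1) (p+1) := by
          simp only [pw, if_neg (ne_of_gt hs0pos), if_neg (ne_of_gt hs1pos)]
          calc s 0 ^ (q+1) ≤ s 1 ^ (q+1) :=
                Real.rpow_le_rpow_of_nonpos hs1pos (hmono 0) hq1.le
          _ ≤ s 1 ^ (p+1) := Real.rpow_le_rpow_of_exponent_ge hs1pos (hle1 1) (by linarith)
        have h2 : ENNReal.ofReal (pw (s 1) (p+1)) ≤ X s :=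
          ENNReal.le_tsum (f := fun i => ENNReal.ofReal (pw (s (i+1)) (p+1))) 0
        calc ENNReal.ofReal (pw (s 0) (q+1)) ≤ ENNReal.ofReal (pw (s 1) (p+1)) :=
              ENNReal.ofReal_le_ofReal h1
        _ ≤ X s := h2
        _ ≤ 1 + X s := le_add_self
    calc (∑' i, ENNReal.ofReal (pw (s i) θ)) ^ γ
        ≤ ∑' i, ENNReal.ofReal (s i) * ENNReal.ofReal (pw (s i) (θ-1)) ^ γ := by
          rw [step1]; exact hJ
    _ = ∑' i, ENNReal.ofReal (pw (s i) (q+1)) := tsum_congr step2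
    _ = ENNReal.ofReal (pw (s 0) (q+1)) + ∑' i, ENNReal.ofReal (pw (s (i+1)) (q+1)) := step3
    _ ≤ (1 + X s) + X s := add_le_add step5 step4
    _ = 1 + (X s + X s) := by rw [add_assoc]
  refine ⟨γ, hγ1, ?_⟩
  have hbound : ∫⁻ s, (∑' i, ENNReal.ofReal (pw (s i) θ)) ^ γ ∂ν
      ≤ ∫⁻ s, (1 + (X s + X s)) ∂ν := lintegral_mono_ae hpt
  have heq : ∫⁻ s, (1 + (X s + X s)) ∂ν
      = 1 * ν Set.univ + (∫⁻ s, X s ∂ν + ∫⁻ s, X s ∂ν) := by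
    rw [lintegral_add_left measurable_const, lintegral_add_left hXmeas, lintegral_const]
  refine lt_of_le_of_lt hbound ?_
  rw [heq]
  have hXfin : ∫⁻ s, X s ∂ν < ⊤ := hp_int
  exact ENNReal.add_lt_top.mpr ⟨by simpa using measure_lt_top ν Set.univ,
    ENNReal.add_lt_top.mpr ⟨hXfin, hXfin⟩⟩
end
end

section
/- Assume in addition that ν is finite and nonzero. Then Φ is differentiable on the interval J := (max(p̲, −1), ∞), the equation Φ(q) = (q+1)Φ′(q) has a unique solution p̄ in J, this solution satisfies p̄ > 0, and for every q ∈ J one has Φ(q) − (q+1)Φ′(q) < 0 if and only if q < p̄. -/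
open MeasureTheory Real Set Filter

noncomputable section

open Topology

lemma pw_of_pos {x : ℝ} (hx : 0 < x) (r : ℝ) : pw x r = x ^ r := by
  simp [pw, ne_of_gt hx]

lemma pw_nonneg {x : ℝ} (hx : 0 ≤ x) (r : ℝ) : 0 ≤ pw x r := by
  rcases eq_or_lt_of_le hx with h | h
  · simp [pw, ← h]
  · rw [pw_of_pos h]; positivity

lemma pw_le_one {x : ℝ} (hx : 0 ≤ x) (hx1 : x ≤ 1) {r : ℝ} (hr : 0 ≤ r) : pw x r ≤ 1 := by
  rcases eq_or_lt_of_le hx with h | h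
  · simp [pw, ← h]
  · rw [pw_of_pos h]
    exact Real.rpow_le_one (le_of_lt h) hx1 hr

lemma pw_mono_exp {x : ℝ} (hx : 0 ≤ x) (hx1 : x ≤ 1) {r r' : ℝ} (h : r ≤ r') :
    pw x r' ≤ pw x r := by
  rcases eq_or_lt_of_le hx with h0 | h0
  · simp [pw, ← h0]
  · rw [pw_of_pos h0, pw_of_pos h0]
    exact Real.rpow_le_rpow_of_exponent_ge h0 hx1 h

lemma hasDerivAt_pw {x : ℝ} (hx : 0 ≤ x) (q : ℝ) :
    HasDerivAt (fun q => pw x (q + 1)) (pw x (q + 1) * Real.log x) q := by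
  rcases eq_or_lt_of_le hx with h0 | h0
  · simp only [pw, ← h0, if_pos rfl, Real.log_zero, zero_mul]
    simpa using (hasDerivAt_const q (0:ℝ))
  · have hne : x ≠ 0 := ne_of_gt h0
    simp only [pw, if_neg hne]
    have h1 : ∀ y : ℝ, x ^ (y + 1) = Real.exp ((y + 1) * Real.log x) := fun y => by
      rw [Real.rpow_def_of_pos h0, mul_comm]
    have h2 : HasDerivAt (fun y : ℝ => Real.exp ((y + 1) * Real.log x))
        (Real.exp ((q + 1) * Real.log x) * Real.log x) q := by
      have hinner : HasDerivAt (fun y : ℝ => (y + 1) * Real.log x) (Real.log x) q := by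
        simpa using ((hasDerivAt_id q).add_const 1).mul_const (Real.log x)
      exact (Real.hasDerivAt_exp ((q + 1) * Real.log x)).comp q hinner
    rw [h1, funext h1]
    exact h2

/-- `x^δ * (-log x) ≤ 1/(e δ)` for `0 < x ≤ 1`, `δ > 0`. -/
lemma rpow_mul_neg_log_le {x δ : ℝ} (hx : 0 < x) (hx1 : x ≤ 1) (hδ : 0 < δ) :
    x ^ δ * (-Real.log x) ≤ (Real.exp 1 * δ)⁻¹ := by
  set t : ℝ := -Real.log x with ht
  have hxt : x = Real.exp (-t) := by rw [ht]; simp [Real.exp_log hx]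
  have hδt : δ * t * Real.exp (-(δ * t)) ≤ (Real.exp 1)⁻¹ := by
    have h := Real.add_one_le_exp (δ * t - 1)
    have h2 : δ * t ≤ Real.exp (δ * t) * (Real.exp 1)⁻¹ := by
      have : Real.exp (δ * t - 1) = Real.exp (δ * t) * (Real.exp 1)⁻¹ := by
        rw [Real.exp_sub]; rw [div_eq_mul_inv]
      linarith [h, this ▸ h]
    calc δ * t * Real.exp (-(δ * t)) ≤ (Real.exp (δ * t) * (Real.exp 1)⁻¹) * Real.exp (-(δ * t)) := by
          apply mul_le_mul_of_nonneg_right h2 (le_of_lt (Real.exp_pos _))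
      _ = (Real.exp 1)⁻¹ * (Real.exp (δ * t) * Real.exp (-(δ * t))) := by ring
      _ = (Real.exp 1)⁻¹ := by rw [← Real.exp_add]; simp
  have hxδ : x ^ δ = Real.exp (-(δ * t)) := by
    rw [hxt, ← Real.exp_mul]; ring_nf
  rw [hxδ, mul_inv]
  calc Real.exp (-(δ * t)) * t = δ * t * Real.exp (-(δ * t)) / δ := by field_simp
    _ ≤ (Real.exp 1)⁻¹ / δ := by gcongr
    _ = (Real.exp 1)⁻¹ * δ⁻¹ := by rw [div_eq_mul_inv]

lemma abs_dt_le {x p a q : ℝ} (hx0 : 0 ≤ x) (hx1 : x ≤ 1) (hpa : p < a) (haq : a ≤ q) :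
    |pw x (q + 1) * Real.log x| ≤ (Real.exp 1 * (a - p))⁻¹ * pw x (p + 1) := by
  rcases eq_or_lt_of_le hx0 with h0 | h0
  · simp [pw, ← h0]
  · have hlog : Real.log x ≤ 0 := Real.log_nonpos (le_of_lt h0) hx1
    have hpw : 0 ≤ pw x (q + 1) := pw_nonneg (le_of_lt h0) _
    have habs : |pw x (q + 1) * Real.log x| = pw x (q + 1) * (-Real.log x) := by
      rw [abs_of_nonpos (mul_nonpos_of_nonneg_of_nonpos hpw hlog)]; ring
    rw [habs, pw_of_pos h0, pw_of_pos h0]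
    have hsplit : x ^ (q + 1) = x ^ (p + 1) * x ^ (q - p) := by
      rw [← Real.rpow_add h0]; ring_nf
    rw [hsplit, mul_assoc]
    rw [mul_comm ((Real.exp 1 * (a - p))⁻¹) (x ^ (p + 1))]
    apply mul_le_mul_of_nonneg_left ?_ (le_of_lt (Real.rpow_pos_of_pos h0 _))
    calc x ^ (q - p) * (-Real.log x) ≤ x ^ (a - p) * (-Real.log x) := by
          apply mul_le_mul_of_nonneg_right
            (Real.rpow_le_rpow_of_exponent_ge h0 hx1 (by linarith)) (by linarith)
      _ ≤ (Real.exp 1 * (a - p))⁻¹ := rpow_mul_neg_log_le h0 hx1 (by linarith)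

/-- The function `u(q,x) = x^{q+1} (1 - (q+1) log x)`. -/
def uu (q x : ℝ) : ℝ := pw x (q + 1) * (1 - (q + 1) * Real.log x)

lemma uu_nonneg {q x : ℝ} (hq : -1 < q) (hx0 : 0 ≤ x) (hx1 : x ≤ 1) : 0 ≤ uu q x := by
  have hlog : Real.log x ≤ 0 := by
    rcases eq_or_lt_of_le hx0 with h0 | h0
    · simp [← h0]
    · exact Real.log_nonpos (le_of_lt h0) hx1
  have : 0 ≤ 1 - (q + 1) * Real.log x := by nlinarith
  exact mul_nonneg (pw_nonneg hx0 _) this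

lemma uu_zero (q : ℝ) : uu q 0 = 0 := by simp [uu, pw]

lemma hasDerivAt_uu {x : ℝ} (hx0 : 0 ≤ x) (q : ℝ) :
    HasDerivAt (fun q => uu q x) (-((q + 1) * (pw x (q + 1) * Real.log x ^ 2))) q := by
  rcases eq_or_lt_of_le hx0 with h0 | h0
  · simp only [uu, pw, ← h0, if_pos rfl, zero_mul]
    simpa using (hasDerivAt_const q (0:ℝ))
  · have h1 : HasDerivAt (fun q : ℝ => pw x (q + 1)) (pw x (q + 1) * Real.log x) q :=
      hasDerivAt_pw hx0 q
    have h2 : HasDerivAt (fun q : ℝ => 1 - (q + 1) * Real.log x) (-Real.log x) q := by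
      have := ((hasDerivAt_id q).add_const 1).mul_const (Real.log x)
      simpa using (this.const_sub 1)
    have h3 := h1.mul h2
    have e : -((q + 1) * (pw x (q + 1) * Real.log x ^ 2)) = pw x (q + 1) * Real.log x * (1 - (q + 1) * Real.log x) + pw x (q + 1) * -Real.log x := by ring
    rw [e]; exact h3
lemma continuous_uu {x : ℝ} (hx0 : 0 ≤ x) : Continuous (fun q => uu q x) := by
  have : Differentiable ℝ (fun q => uu q x) := fun q => (hasDerivAt_uu hx0 q).differentiableAt
  exact this.continuous

lemma uu_strictAntiOn {x : ℝ} (hx0 : 0 < x) (hx1 : x < 1) :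
    StrictAntiOn (fun q => uu q x) (Ioi (-1 : ℝ)) := by
  apply strictAntiOn_of_deriv_neg (convex_Ioi _) (continuous_uu (le_of_lt hx0)).continuousOn
  intro q hq
  rw [interior_Ioi] at hq
  rw [(hasDerivAt_uu (le_of_lt hx0) q).deriv]
  have hlog : Real.log x < 0 := Real.log_neg hx0 hx1
  have hpw : 0 < pw x (q + 1) := by rw [pw_of_pos hx0]; exact Real.rpow_pos_of_pos hx0 _
  have hq' : (-1:ℝ) < q := hq
  have hq1 : 0 < q + 1 := by linarith
  have hsq : 0 < Real.log x ^ 2 := pow_two_pos_of_ne_zero (ne_of_lt hlog)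
  have : 0 < (q + 1) * (pw x (q + 1) * Real.log x ^ 2) := by positivity
  linarith

lemma uu_antitone {x q1 q2 : ℝ} (hx0 : 0 ≤ x) (hx1 : x < 1) (h1 : -1 < q1) (h12 : q1 ≤ q2) :
    uu q2 x ≤ uu q1 x := by
  rcases eq_or_lt_of_le hx0 with h0 | h0
  · simp [← h0, uu_zero]
  · rcases eq_or_lt_of_le h12 with h | h
    · rw [h]
    · exact le_of_lt (uu_strictAntiOn h0 hx1 (by exact h1) (by simp; linarith) h)

lemma uu_le_two_mul {q x : ℝ} (hq : 1 ≤ q) (hx0 : 0 ≤ x) (hx1 : x ≤ 1) : uu q x ≤ 2 * x := by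
  rcases eq_or_lt_of_le hx0 with h0 | h0
  · simp [← h0, uu_zero]
  · have hlog : Real.log x ≤ 0 := Real.log_nonpos (le_of_lt h0) hx1
    have hsplit : x ^ (q + 1) = x ^ q * x := by
      rw [Real.rpow_add h0, Real.rpow_one]
    have h1 : x ^ q ≤ 1 := Real.rpow_le_one hx0 hx1 (by linarith)
    have h2 : x ^ q * (-Real.log x) ≤ (Real.exp 1 * q)⁻¹ :=
      rpow_mul_neg_log_le h0 hx1 (by linarith)
    have he : (2:ℝ) ≤ Real.exp 1 := by have := Real.add_one_le_exp 1; linarith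
    have hq0 : 0 < Real.exp 1 * q := by positivity
    have h3 : (q + 1) * (Real.exp 1 * q)⁻¹ ≤ 1 := by
      rw [← div_eq_mul_inv, div_le_one hq0]; nlinarith
    have h4 : (q + 1) * (x ^ q * (-Real.log x)) ≤ 1 := by
      calc (q + 1) * (x ^ q * (-Real.log x)) ≤ (q + 1) * (Real.exp 1 * q)⁻¹ :=
            mul_le_mul_of_nonneg_left h2 (by linarith)
        _ ≤ 1 := h3
    have key : uu q x = x * (x ^ q + (q + 1) * (x ^ q * (-Real.log x))) := by
      rw [uu, pw_of_pos h0, hsplit]; ring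
    rw [key]
    calc x * (x ^ q + (q + 1) * (x ^ q * (-Real.log x))) ≤ x * (1 + 1) := by
          apply mul_le_mul_of_nonneg_left ?_ hx0
          linarith
      _ = 2 * x := by ring

lemma tendsto_uu_atTop {x : ℝ} (hx0 : 0 ≤ x) (hx1 : x < 1) :
    Tendsto (fun n : ℕ => uu ((n : ℝ) + 1) x) atTop (𝓝 0) := by
  rcases eq_or_lt_of_le hx0 with h0 | h0
  · simp only [← h0, uu_zero]; exact tendsto_const_nhds
  · have hlog : Real.log x < 0 := Real.log_neg h0 hx1
    have key : ∀ n : ℕ, uu ((n : ℝ) + 1) x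
        = Real.exp (-(((n:ℝ) + 2) * (-Real.log x)))
          * (1 + ((n:ℝ) + 2) * (-Real.log x)) := by
      intro n
      rw [uu, pw_of_pos h0, Real.rpow_def_of_pos h0]
      ring_nf
    simp only [key]
    have hT : Tendsto (fun n : ℕ => ((n:ℝ) + 2) * (-Real.log x)) atTop atTop := by
      apply Tendsto.atTop_mul_const (by linarith)
      exact tendsto_atTop_add_const_right _ 2 tendsto_natCast_atTop_atTop
    have hbase : Tendsto (fun u : ℝ => Real.exp (-u) * (1 + u)) atTop (𝓝 0) := by
      have h1 : Tendsto (fun u : ℝ => Real.exp (-u)) atTop (𝓝 0) :=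
        Real.tendsto_exp_neg_atTop_nhds_zero
      have h2 : Tendsto (fun u : ℝ => u * Real.exp (-u)) atTop (𝓝 0) := by
        have := Real.tendsto_pow_mul_exp_neg_atTop_nhds_zero 1
        simpa using this
      have := h1.add h2
      simp only [add_zero] at this
      convert this using 2 with u
      ring
    exact hbase.comp hT

lemma summable_of_tsum_ofReal_ne_top {f : ℕ → ℝ} (h0 : ∀ i, 0 ≤ f i)
    (h : ∑' i, ENNReal.ofReal (f i) ≠ ⊤) : Summable f := by
  have := ENNReal.summable_toReal h
  have heq : (fun i => (ENNReal.ofReal (f i)).toReal) = f := by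
    funext i; exact ENNReal.toReal_ofReal (h0 i)
  rwa [heq] at this

lemma tsum_eq_toReal_tsum_ofReal {f : ℕ → ℝ} (h0 : ∀ i, 0 ≤ f i) :
    ∑' i, f i = (∑' i, ENNReal.ofReal (f i)).toReal := by
  by_cases h : Summable f
  · rw [← ENNReal.ofReal_tsum_of_nonneg h0 h, ENNReal.toReal_ofReal (tsum_nonneg h0)]
  · rw [tsum_eq_zero_of_not_summable h]
    have htop : ∑' i, ENNReal.ofReal (f i) = ⊤ := by
      by_contra hne
      exact h (summable_of_tsum_ofReal_ne_top h0 hne)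
    simp [htop]

lemma ofReal_tsum_eq {f : ℕ → ℝ} (h0 : ∀ i, 0 ≤ f i) (h : Summable f) :
    ENNReal.ofReal (∑' i, f i) = ∑' i, ENNReal.ofReal (f i) :=
  ENNReal.ofReal_tsum_of_nonneg h0 h


open scoped ENNReal

/-- ENNReal-valued sum `Σ_i ofReal (g (s i))`. -/
def eS (g : ℝ → ℝ) (s : ℕ → ℝ) : ℝ≥0∞ := ∑' i, ENNReal.ofReal (g (s i))

/-- ENNReal-valued tail sum at exponent `p+1`. -/
def eTail (p : ℝ) (s : ℕ → ℝ) : ℝ≥0∞ := ∑' i, ENNReal.ofReal (pw (s (i + 1)) (p + 1))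

/-- Good configurations. -/
def Good (s : ℕ → ℝ) : Prop :=
  (∀ i, 0 ≤ s i) ∧ (∀ i, s i < 1) ∧ Summable s ∧ HasSum s 1 ∧ 0 < s 0

lemma meas_pw (r : ℝ) : Measurable (fun x : ℝ => pw x r) := by
  unfold pw
  exact Measurable.ite (measurableSet_eq) measurable_const
    (measurable_id.pow measurable_const)

lemma meas_eS {g : ℝ → ℝ} (hg : Measurable g) : Measurable (eS g) :=
  Measurable.ennreal_tsum fun i =>
    ENNReal.measurable_ofReal.comp (hg.comp (measurable_pi_apply i))

lemma meas_eTail (p : ℝ) : Measurable (eTail p) :=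
  Measurable.ennreal_tsum fun i =>
    ENNReal.measurable_ofReal.comp ((meas_pw (p + 1)).comp (measurable_pi_apply (i + 1)))

lemma good_ae {ν : Measure (ℕ → ℝ)} (hν : IsDislocation ν) : ∀ᵐ s ∂ν, Good s := by
  have h1 : ∀ᵐ s ∂ν, (inS s ∧ HasSum s 1) := by
    rw [ae_iff]; exact hν.carried
  have h2 : ∀ᵐ s ∂ν, s ≠ oneConf := by
    rw [ae_iff]
    convert hν.no_one using 2
    ext s; simp
  filter_upwards [h1, h2] with s hs hone
  obtain ⟨⟨hnn, hmono, hsum⟩, hhs⟩ := hs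
  have hle0 : ∀ i, s i ≤ s 0 := by
    intro i
    induction i with
    | zero => exact le_refl _
    | succ n ih => exact le_trans (hmono n) ih
  have hs0le : s 0 ≤ 1 := by
    have := hsum {0}
    simpa using this
  have hs0lt : s 0 < 1 := by
    rcases lt_or_eq_of_le hs0le with h | h
    · exact h
    · exfalso; apply hone
      funext i
      rcases Nat.eq_zero_or_pos i with h0 | hpos
      · simp [h0, oneConf, h]
      · have hne : i ≠ 0 := Nat.pos_iff_ne_zero.mp hpos
        have := hsum {0, i}
        rw [Finset.sum_pair hne.symm] at this
        have hzero : s i = 0 := le_antisymm (by rw [h] at this; linarith) (hnn i)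
        simp [oneConf, hne, hzero]
  have hpos0 : 0 < s 0 := by
    rcases lt_or_eq_of_le (hnn 0) with h | h
    · exact h
    · exfalso
      have hz : ∀ i, s i = 0 := fun i => le_antisymm (by linarith [hle0 i]) (hnn i)
      have : HasSum s 0 := by
        convert hasSum_zero with i
        exact hz i
      have := hhs.unique this
      norm_num at this
  exact ⟨hnn, fun i => lt_of_le_of_lt (hle0 i) hs0lt, hhs.summable, hhs, hpos0⟩

lemma aesm_tsum {ν : Measure (ℕ → ℝ)} {g : ℝ → ℝ} (hg : Measurable g)
    (h0 : ∀ᵐ s ∂ν, ∀ i, 0 ≤ g (s i)) :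
    AEStronglyMeasurable (fun s => ∑' i, g (s i)) ν := by
  refine ((meas_eS hg).ennreal_toReal).aestronglyMeasurable.congr ?_
  filter_upwards [h0] with s hs
  exact (tsum_eq_toReal_tsum_ofReal hs).symm

lemma lint_toReal_integrable {ν : Measure (ℕ → ℝ)} {g : ℝ → ℝ} (hg : Measurable g)
    (h0 : ∀ᵐ s ∂ν, ∀ i, 0 ≤ g (s i)) (h : ∫⁻ s, eS g s ∂ν < ⊤) :
    Integrable (fun s => ∑' i, g (s i)) ν := by
  have h1 : Integrable (fun s => (eS g s).toReal) ν :=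
    integrable_toReal_of_lintegral_ne_top (meas_eS hg).aemeasurable h.ne
  refine h1.congr ?_
  filter_upwards [h0] with s hs
  exact (tsum_eq_toReal_tsum_ofReal hs).symm


lemma pw_one (x : ℝ) (hx : 0 ≤ x) : pw x 1 = x := by
  unfold pw; split_ifs with h
  · exact h.symm
  · exact Real.rpow_one x

lemma pLow_le_zero {ν : Measure (ℕ → ℝ)} (hν : IsDislocation ν) [IsFiniteMeasure ν] :
    pLow ν ≤ ((0 : ℝ) : EReal) := by
  apply sInf_le
  refine ⟨0, rfl, ?_⟩
  have hb : ∀ᵐ s ∂ν, (∑' i, ENNReal.ofReal (pw (s (i + 1)) (0 + 1))) ≤ 1 := by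
    filter_upwards [good_ae hν] with s hs
    have h1 : ∑' i, ENNReal.ofReal (s i) = ENNReal.ofReal 1 := by
      rw [← ofReal_tsum_eq hs.1 hs.2.2.1, hs.2.2.2.1.tsum_eq]
    calc (∑' i, ENNReal.ofReal (pw (s (i + 1)) (0 + 1)))
        = ∑' i, ENNReal.ofReal (s (i + 1)) := by
          congr 1; funext i
          rw [zero_add, pw_one _ (hs.1 _)]
      _ ≤ ∑' i, ENNReal.ofReal (s i) :=
          ENNReal.tsum_comp_le_tsum_of_injective (fun a b h => by omega) _
      _ = 1 := by rw [h1, ENNReal.ofReal_one]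
  calc ∫⁻ s, (∑' i, ENNReal.ofReal (pw (s (i + 1)) (0 + 1))) ∂ν
      ≤ ∫⁻ _, 1 ∂ν := lintegral_mono_ae hb
    _ = ν univ := lintegral_one
    _ < ⊤ := measure_lt_top ν univ

lemma exists_p {ν : Measure (ℕ → ℝ)} (hν : IsDislocation ν) {q : ℝ}
    (hq1 : -1 < q) (hq2 : pLow ν < (q : EReal)) :
    ∃ p : ℝ, (-1 < p ∧ pLow ν ≤ (p : EReal)) ∧ p < q ∧ ∫⁻ s, eTail p s ∂ν < ⊤ := by
  obtain ⟨x, hxS, hxlt⟩ := sInf_lt_iff.mp hq2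
  obtain ⟨p0, rfl, hfin0⟩ := hxS
  have hp0q : p0 < q := EReal.coe_lt_coe_iff.mp hxlt
  refine ⟨max p0 ((q + -1) / 2), ⟨?_, ?_⟩, ?_, ?_⟩
  · calc (-1 : ℝ) < (q + -1) / 2 := by linarith
      _ ≤ _ := le_max_right _ _
  · calc pLow ν ≤ (p0 : EReal) := sInf_le ⟨p0, rfl, hfin0⟩
      _ ≤ _ := by
        rw [EReal.coe_le_coe_iff]
        exact le_max_left _ _
  · exact max_lt hp0q (by linarith)
  · refine lt_of_le_of_lt ?_ hfin0
    apply lintegral_mono_ae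
    filter_upwards [good_ae hν] with s hs
    apply ENNReal.tsum_le_tsum; intro i
    apply ENNReal.ofReal_le_ofReal
    exact pw_mono_exp (hs.1 _) (le_of_lt (hs.2.1 _))
      (by linarith [le_max_left p0 ((q + -1) / 2)])

lemma ennreal_tsum_split (f : ℕ → ℝ≥0∞) : ∑' i, f i = f 0 + ∑' i, f (i + 1) :=
  tsum_eq_zero_add' ENNReal.summable

lemma eS_pw_le {p q : ℝ} {s : ℕ → ℝ} (hs : Good s) (hp : -1 < p) (hpq : p ≤ q) :
    eS (fun x => pw x (q + 1)) s ≤ 1 + eTail p s := by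
  rw [eS, ennreal_tsum_split]
  have h1 : ENNReal.ofReal (pw (s 0) (q + 1)) ≤ 1 :=
    ENNReal.ofReal_le_one.mpr (pw_le_one (hs.1 0) (le_of_lt (hs.2.1 0)) (by linarith))
  have h2 : (∑' i, ENNReal.ofReal (pw (s (i + 1)) (q + 1))) ≤ eTail p s := by
    apply ENNReal.tsum_le_tsum; intro i
    exact ENNReal.ofReal_le_ofReal
      (pw_mono_exp (hs.1 _) (le_of_lt (hs.2.1 _)) (by linarith))
  exact add_le_add h1 h2

lemma lint_eS_pw_lt_top {ν : Measure (ℕ → ℝ)} (hν : IsDislocation ν) [IsFiniteMeasure ν]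
    {p q : ℝ} (hp : -1 < p) (hpq : p ≤ q) (hfin : ∫⁻ s, eTail p s ∂ν < ⊤) :
    ∫⁻ s, eS (fun x => pw x (q + 1)) s ∂ν < ⊤ := by
  calc ∫⁻ s, eS (fun x => pw x (q + 1)) s ∂ν
      ≤ ∫⁻ s, (1 + eTail p s) ∂ν := by
        apply lintegral_mono_ae
        filter_upwards [good_ae hν] with s hs
        exact eS_pw_le hs hp hpq
    _ = ν univ + ∫⁻ s, eTail p s ∂ν := by
        rw [lintegral_add_left measurable_const, lintegral_one]
    _ < ⊤ := ENNReal.add_lt_top.mpr ⟨measure_lt_top ν univ, hfin⟩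

/-- The (nonnegative) derivative term `-(x^{q+1} log x)`. -/
def gd (q x : ℝ) : ℝ := -(pw x (q + 1) * Real.log x)

lemma meas_gd (q : ℝ) : Measurable (gd q) :=
  ((meas_pw (q + 1)).mul Real.measurable_log).neg

lemma gd_nonneg {q x : ℝ} (hx0 : 0 ≤ x) (hx1 : x ≤ 1) : 0 ≤ gd q x := by
  have hlog : Real.log x ≤ 0 := by
    rcases eq_or_lt_of_le hx0 with h | h
    · simp [← h]
    · exact Real.log_nonpos (le_of_lt h) hx1
  have := mul_nonpos_of_nonneg_of_nonpos (pw_nonneg hx0 (q + 1)) hlog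
  unfold gd; linarith

lemma gd_le {x p a q : ℝ} (hx0 : 0 ≤ x) (hx1 : x ≤ 1) (hpa : p < a) (haq : a ≤ q) :
    gd q x ≤ (Real.exp 1 * (a - p))⁻¹ * pw x (p + 1) := by
  have := abs_dt_le hx0 hx1 hpa haq
  calc gd q x ≤ |pw x (q + 1) * Real.log x| := by
        rw [gd]; exact neg_le_abs _
    _ ≤ _ := this

lemma summable_pw_ae {ν : Measure (ℕ → ℝ)} (hν : IsDislocation ν) {p : ℝ}
    (hfin : ∫⁻ s, eTail p s ∂ν < ⊤) :
    ∀ᵐ s ∂ν, Summable (fun i => pw (s i) (p + 1)) := by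
  have h1 : ∀ᵐ s ∂ν, eTail p s < ⊤ := ae_lt_top (meas_eTail p) hfin.ne
  filter_upwards [h1, good_ae hν] with s h1 hg
  have tail : Summable (fun i => pw (s (i + 1)) (p + 1)) :=
    summable_of_tsum_ofReal_ne_top (fun i => pw_nonneg (hg.1 _) _) h1.ne
  exact (summable_nat_add_iff 1).mp tail

lemma summable_pw_of_le {s : ℕ → ℝ} {p q : ℝ} (hg : Good s)
    (hS : Summable (fun i => pw (s i) (p + 1))) (hpq : p ≤ q) :
    Summable (fun i => pw (s i) (q + 1)) :=
  hS.of_nonneg_of_le (fun i => pw_nonneg (hg.1 i) _)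
    (fun i => pw_mono_exp (hg.1 i) (le_of_lt (hg.2.1 i)) (by linarith))

lemma summable_gd {s : ℕ → ℝ} {p a q : ℝ} (hg : Good s)
    (hS : Summable (fun i => pw (s i) (p + 1))) (hpa : p < a) (haq : a ≤ q) :
    Summable (fun i => gd q (s i)) := by
  apply Summable.of_nonneg_of_le (fun i => gd_nonneg (hg.1 i) (le_of_lt (hg.2.1 i)))
    (fun i => gd_le (hg.1 i) (le_of_lt (hg.2.1 i)) hpa haq)
  exact hS.mul_left _

lemma phi_deriv {ν : Measure (ℕ → ℝ)} (hν : IsDislocation ν) [IsFiniteMeasure ν] {q : ℝ}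
    (hq1 : -1 < q) (hq2 : pLow ν < (q : EReal)) :
    HasDerivAt (Phi ν) (∫ s, ∑' i, gd q (s i) ∂ν) q ∧
      Integrable (fun s => ∑' i, gd q (s i)) ν := by
  obtain ⟨p, ⟨hp, hplow⟩, hpq, hfin⟩ := exists_p hν hq1 hq2
  set a : ℝ := (p + q) / 2 with ha
  set ε : ℝ := (q - p) / 2 with hε
  have hεpos : 0 < ε := by rw [hε]; linarith
  have hpa : p < a := by rw [ha]; linarith
  have haq : a < q := by rw [ha]; linarith
  set C : ℝ := (Real.exp 1 * (a - p))⁻¹ with hC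
  have hCpos : 0 ≤ C := by
    rw [hC]
    have h1 : 0 < Real.exp 1 * (a - p) := mul_pos (Real.exp_pos 1) (by linarith)
    exact le_of_lt (inv_pos.mpr h1)
  have hball : ∀ y : ℝ, y ∈ Metric.ball q ε → a < y := by
    intro y hy
    rw [Metric.mem_ball, Real.dist_eq, abs_lt] at hy
    rw [ha]; linarith [hy.1]
  have hgd_nonneg : ∀ q' : ℝ, ∀ᵐ s ∂ν, ∀ i, 0 ≤ gd q' (s i) := by
    intro q'
    filter_upwards [good_ae hν] with s hs i
    exact gd_nonneg (hs.1 i) (le_of_lt (hs.2.1 i))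
  have hpw_nonneg : ∀ q' : ℝ, ∀ᵐ s ∂ν, ∀ i, 0 ≤ pw (s i) (q' + 1) := by
    intro q'
    filter_upwards [good_ae hν] with s hs i
    exact pw_nonneg (hs.1 i) _
  have bound_int : Integrable (fun s => C * ∑' i, pw (s i) (p + 1)) ν := by
    exact (lint_toReal_integrable (meas_pw (p + 1)) (hpw_nonneg p)
      (lint_eS_pw_lt_top hν hp (le_refl p) hfin)).const_mul C
  have key := hasDerivAt_integral_of_dominated_loc_of_deriv_le (μ := ν)
    (F := fun q' s => 1 - ∑' i, pw (s i) (q' + 1))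
    (F' := fun q' s => ∑' i, gd q' (s i))
    (bound := fun s => C * ∑' i, pw (s i) (p + 1)) (x₀ := q) (Metric.ball_mem_nhds q hεpos)
    ?_ ?_ ?_ ?_ bound_int ?_
  · exact ⟨key.2, key.1⟩
  · apply Eventually.of_forall
    intro q'
    exact aestronglyMeasurable_const.sub (aesm_tsum (meas_pw (q' + 1)) (hpw_nonneg q'))
  · exact (integrable_const 1).sub (lint_toReal_integrable (meas_pw (q + 1)) (hpw_nonneg q)
      (lint_eS_pw_lt_top hν hp (le_of_lt hpq) hfin))
  · exact aesm_tsum (meas_gd q) (hgd_nonneg q)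
  · -- bound
    filter_upwards [good_ae hν, summable_pw_ae hν hfin] with s hg hSp
    intro x hx
    have hax : a < x := hball x hx
    have hSgd : Summable (fun i => gd x (s i)) := summable_gd hg hSp hpa (le_of_lt hax)
    have h1 : ∑' i, gd x (s i) ≤ ∑' i, C * pw (s i) (p + 1) := by
      apply Summable.tsum_le_tsum ?_ hSgd (hSp.mul_left C)
      intro i
      exact gd_le (hg.1 i) (le_of_lt (hg.2.1 i)) hpa (le_of_lt hax)
    have h0 : 0 ≤ ∑' i, gd x (s i) :=
      tsum_nonneg (fun i => gd_nonneg (hg.1 i) (le_of_lt (hg.2.1 i)))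
    rw [Real.norm_eq_abs, abs_of_nonneg h0, tsum_mul_left] at *
    exact h1
  · -- differentiability
    filter_upwards [good_ae hν, summable_pw_ae hν hfin] with s hg hSp
    intro x hx
    have hax : a < x := hball x hx
    have inner : HasDerivAt (fun z => ∑' i, pw (s i) (z + 1))
        (∑' i, pw (s i) (x + 1) * Real.log (s i)) x := by
      apply hasDerivAt_tsum_of_isPreconnected
        (u := fun i => C * pw (s i) (p + 1)) (hSp.mul_left C) isOpen_Ioi
        (isPreconnected_Ioi) (y₀ := q) (y := x)
      · intro n y hy
        exact hasDerivAt_pw (hg.1 n) y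
      · intro n y hy
        rw [Real.norm_eq_abs]
        exact abs_dt_le (hg.1 n) (le_of_lt (hg.2.1 n)) hpa (le_of_lt hy)
      · exact haq
      · exact summable_pw_of_le hg hSp (le_of_lt hpq)
      · exact hax
    have h2 := inner.const_sub 1
    convert h2 using 1
    rw [← tsum_neg]
    congr 1


lemma uu_eq (q x : ℝ) : uu q x = pw x (q + 1) + (q + 1) * gd q x := by
  unfold uu gd; ring

lemma meas_uu (q : ℝ) : Measurable (uu q) := by
  unfold uu
  exact (meas_pw (q + 1)).mul
    (measurable_const.sub (measurable_const.mul Real.measurable_log))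

lemma summable_uu {s : ℕ → ℝ} {p q : ℝ} (hg : Good s)
    (hS : Summable (fun i => pw (s i) (p + 1))) (hpq : p < q) :
    Summable (fun i => uu q (s i)) := by
  have h := (summable_pw_of_le hg hS (le_of_lt hpq)).add
    (((summable_gd hg hS hpq (le_refl q)).mul_left (q + 1)))
  refine h.congr fun i => ?_
  rw [uu_eq]

lemma J_nhds {ν : Measure (ℕ → ℝ)} (hν : IsDislocation ν) {q : ℝ}
    (hq1 : -1 < q) (hq2 : pLow ν < (q : EReal)) :
    ∀ᶠ q' : ℝ in 𝓝 q, -1 < q' ∧ pLow ν < ((q' : ℝ) : EReal) := by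
  obtain ⟨p, ⟨hp, hplow⟩, hpq, hfin⟩ := exists_p hν hq1 hq2
  have : Metric.ball q (q - p) ∈ 𝓝 q := Metric.ball_mem_nhds q (by linarith)
  filter_upwards [this] with q' hq'
  rw [Metric.mem_ball, Real.dist_eq, abs_lt] at hq'
  have hpq' : p < q' := by linarith [hq'.1]
  exact ⟨by linarith, lt_of_le_of_lt hplow (EReal.coe_lt_coe_iff.mpr hpq')⟩

lemma integrable_tsum_pw {ν : Measure (ℕ → ℝ)} (hν : IsDislocation ν) [IsFiniteMeasure ν]
    {q : ℝ} (hq1 : -1 < q) (hq2 : pLow ν < (q : EReal)) :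
    Integrable (fun s => ∑' i, pw (s i) (q + 1)) ν := by
  obtain ⟨p, ⟨hp, _⟩, hpq, hfin⟩ := exists_p hν hq1 hq2
  apply lint_toReal_integrable (meas_pw (q + 1)) ?_ (lint_eS_pw_lt_top hν hp (le_of_lt hpq) hfin)
  filter_upwards [good_ae hν] with s hs i
  exact pw_nonneg (hs.1 i) _

lemma phi_eq {ν : Measure (ℕ → ℝ)} (hν : IsDislocation ν) [IsFiniteMeasure ν]
    {q : ℝ} (hq1 : -1 < q) (hq2 : pLow ν < (q : EReal)) :
    Phi ν q = (ν univ).toReal - ∫ s, ∑' i, pw (s i) (q + 1) ∂ν := by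
  have h1 : Integrable (fun _ : ℕ → ℝ => (1 : ℝ)) ν := integrable_const 1
  have h2 := integrable_tsum_pw hν hq1 hq2
  rw [Phi, integral_sub h1 h2, integral_const, smul_eq_mul, mul_one]
  rfl

lemma uq_ae_eq {ν : Measure (ℕ → ℝ)} (hν : IsDislocation ν) [IsFiniteMeasure ν]
    {q : ℝ} (hq1 : -1 < q) (hq2 : pLow ν < (q : EReal)) :
    (fun s => ∑' i, uu q (s i)) =ᵐ[ν]
      (fun s => (∑' i, pw (s i) (q + 1)) + (q + 1) * ∑' i, gd q (s i)) := by
  obtain ⟨p, ⟨hp, _⟩, hpq, hfin⟩ := exists_p hν hq1 hq2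
  filter_upwards [good_ae hν, summable_pw_ae hν hfin] with s hg hSp
  have h1 : Summable (fun i => pw (s i) (q + 1)) := summable_pw_of_le hg hSp (le_of_lt hpq)
  have h2 : Summable (fun i => gd q (s i)) := summable_gd hg hSp hpq (le_refl q)
  calc (∑' i, uu q (s i)) = ∑' i, (pw (s i) (q + 1) + (q + 1) * gd q (s i)) := by
        congr 1; funext i; exact uu_eq q (s i)
    _ = (∑' i, pw (s i) (q + 1)) + ∑' i, (q + 1) * gd q (s i) :=
        Summable.tsum_add h1 (h2.mul_left _)
    _ = (∑' i, pw (s i) (q + 1)) + (q + 1) * ∑' i, gd q (s i) := by rw [tsum_mul_left]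

lemma integrable_tsum_uu {ν : Measure (ℕ → ℝ)} (hν : IsDislocation ν) [IsFiniteMeasure ν]
    {q : ℝ} (hq1 : -1 < q) (hq2 : pLow ν < (q : EReal)) :
    Integrable (fun s => ∑' i, uu q (s i)) ν := by
  have h1 := integrable_tsum_pw hν hq1 hq2
  have h2 := (phi_deriv hν hq1 hq2).2
  exact (h1.add (h2.const_mul (q + 1))).congr (uq_ae_eq hν hq1 hq2).symm

lemma G_eq {ν : Measure (ℕ → ℝ)} (hν : IsDislocation ν) [IsFiniteMeasure ν]
    {q : ℝ} (hq1 : -1 < q) (hq2 : pLow ν < (q : EReal)) :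
    Phi ν q - (q + 1) * deriv (Phi ν) q
      = (ν univ).toReal - ∫ s, ∑' i, uu q (s i) ∂ν := by
  have hd := (phi_deriv hν hq1 hq2).1.deriv
  rw [hd, phi_eq hν hq1 hq2, integral_congr_ae (uq_ae_eq hν hq1 hq2),
    integral_add (integrable_tsum_pw hν hq1 hq2) ((phi_deriv hν hq1 hq2).2.const_mul (q + 1)),
    integral_const_mul]
  ring

lemma intU_strict_anti {ν : Measure (ℕ → ℝ)} (hν : IsDislocation ν) [IsFiniteMeasure ν]
    (hν0 : ν ≠ 0) {q1 q2 : ℝ}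
    (h11 : -1 < q1) (h12 : pLow ν < (q1 : EReal))
    (h21 : -1 < q2) (h22 : pLow ν < (q2 : EReal)) (hlt : q1 < q2) :
    ∫ s, ∑' i, uu q2 (s i) ∂ν < ∫ s, ∑' i, uu q1 (s i) ∂ν := by
  obtain ⟨p, ⟨hp, _⟩, hpq, hfin⟩ := exists_p hν h11 h12
  set f : (ℕ → ℝ) → ℝ := fun s => (∑' i, uu q1 (s i)) - ∑' i, uu q2 (s i) with hf
  have hint1 := integrable_tsum_uu hν h11 h12
  have hint2 := integrable_tsum_uu hν h21 h22
  have hintf : Integrable f ν := hint1.sub hint2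
  have hposf : ∀ᵐ s ∂ν, 0 < f s := by
    filter_upwards [good_ae hν, summable_pw_ae hν hfin] with s hg hSp
    have hS1 : Summable (fun i => uu q1 (s i)) := summable_uu hg hSp hpq
    have hS2 : Summable (fun i => uu q2 (s i)) :=
      summable_uu hg hSp (lt_trans hpq hlt)
    have hterm : ∀ i, 0 ≤ uu q1 (s i) - uu q2 (s i) := fun i =>
      sub_nonneg.mpr (uu_antitone (hg.1 i) (hg.2.1 i) h11 (le_of_lt hlt))
    have h0 : 0 < uu q1 (s 0) - uu q2 (s 0) := by
      have := uu_strictAntiOn hg.2.2.2.2 (hg.2.1 0) (mem_Ioi.mpr h11)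
        (mem_Ioi.mpr (lt_trans h11 hlt)) hlt
      simpa using sub_pos.mpr this
    have : f s = ∑' i, (uu q1 (s i) - uu q2 (s i)) := (Summable.tsum_sub hS1 hS2).symm
    rw [this]
    calc (0:ℝ) < uu q1 (s 0) - uu q2 (s 0) := h0
      _ ≤ ∑' i, (uu q1 (s i) - uu q2 (s i)) := Summable.le_tsum (hS1.sub hS2) 0 (fun i _ => hterm i)
  have hnn : 0 ≤ᵐ[ν] f := hposf.mono fun s hs => le_of_lt hs
  have hsupp : ν ((Function.support f)ᶜ) = 0 := by
    have h := hposf.mono fun s hs => ne_of_gt hs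
    rw [ae_iff] at h
    have hset : (Function.support f)ᶜ = {s | ¬ f s ≠ 0} := by
      ext s; simp [Function.support]
    rw [hset]; exact h
  have hpos : 0 < ∫ s, f s ∂ν := by
    rw [integral_pos_iff_support_of_nonneg_ae hnn hintf]
    have huniv : ν (Function.support f) = ν univ := by
      apply le_antisymm (measure_mono (subset_univ _))
      calc ν univ = ν (Function.support f ∪ (Function.support f)ᶜ) := by
            rw [union_compl_self]
        _ ≤ ν (Function.support f) + ν ((Function.support f)ᶜ) := measure_union_le _ _
        _ = ν (Function.support f) := by rw [hsupp, add_zero]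
    rw [huniv]
    exact Measure.measure_univ_pos.mpr hν0
  have h2 : ∫ s, f s ∂ν
      = (∫ s, ∑' i, uu q1 (s i) ∂ν) - ∫ s, ∑' i, uu q2 (s i) ∂ν :=
    integral_sub hint1 hint2
  linarith [h2 ▸ hpos]

lemma phiD_cont {ν : Measure (ℕ → ℝ)} (hν : IsDislocation ν) [IsFiniteMeasure ν] {q : ℝ}
    (hq1 : -1 < q) (hq2 : pLow ν < (q : EReal)) :
    ContinuousAt (fun q' => ∫ s, ∑' i, gd q' (s i) ∂ν) q := by
  obtain ⟨p, ⟨hp, hplow⟩, hpq, hfin⟩ := exists_p hν hq1 hq2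
  set a : ℝ := (p + q) / 2 with ha
  set ε : ℝ := (q - p) / 2 with hε
  have hεpos : 0 < ε := by rw [hε]; linarith
  have hpa : p < a := by rw [ha]; linarith
  have haq : a < q := by rw [ha]; linarith
  set C : ℝ := (Real.exp 1 * (a - p))⁻¹ with hC
  have hball : ∀ y : ℝ, y ∈ Metric.ball q ε → a < y := by
    intro y hy
    rw [Metric.mem_ball, Real.dist_eq, abs_lt] at hy
    rw [ha]; linarith [hy.1]
  have hgd_nonneg : ∀ q' : ℝ, ∀ᵐ s ∂ν, ∀ i, 0 ≤ gd q' (s i) := by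
    intro q'
    filter_upwards [good_ae hν] with s hs i
    exact gd_nonneg (hs.1 i) (le_of_lt (hs.2.1 i))
  have hpw_nonneg : ∀ᵐ s ∂ν, ∀ i, 0 ≤ pw (s i) (p + 1) := by
    filter_upwards [good_ae hν] with s hs i
    exact pw_nonneg (hs.1 i) _
  have bound_int : Integrable (fun s => C * ∑' i, pw (s i) (p + 1)) ν :=
    (lint_toReal_integrable (meas_pw (p + 1)) hpw_nonneg
      (lint_eS_pw_lt_top hν hp (le_refl p) hfin)).const_mul C
  apply continuousAt_of_dominated (bound := fun s => C * ∑' i, pw (s i) (p + 1))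
  · exact Eventually.of_forall fun q' => aesm_tsum (meas_gd q') (hgd_nonneg q')
  · filter_upwards [Metric.ball_mem_nhds q hεpos] with x hx
    filter_upwards [good_ae hν, summable_pw_ae hν hfin] with s hg hSp
    have hax : a < x := hball x hx
    have hSgd : Summable (fun i => gd x (s i)) := summable_gd hg hSp hpa (le_of_lt hax)
    have h1 : ∑' i, gd x (s i) ≤ ∑' i, C * pw (s i) (p + 1) := by
      apply Summable.tsum_le_tsum ?_ hSgd (hSp.mul_left C)
      intro i
      exact gd_le (hg.1 i) (le_of_lt (hg.2.1 i)) hpa (le_of_lt hax)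
    have h0 : 0 ≤ ∑' i, gd x (s i) :=
      tsum_nonneg (fun i => gd_nonneg (hg.1 i) (le_of_lt (hg.2.1 i)))
    rw [Real.norm_eq_abs, abs_of_nonneg h0, tsum_mul_left] at *
    exact h1
  · exact bound_int
  · filter_upwards [good_ae hν, summable_pw_ae hν hfin] with s hg hSp
    have hcont : ContinuousOn (fun x => ∑' i, gd x (s i)) (Ioi a) := by
      apply continuousOn_tsum (u := fun i => C * pw (s i) (p + 1))
      · intro i
        apply Continuous.continuousOn
        have : Continuous (fun y : ℝ => pw (s i) (y + 1)) := by
          have hd : Differentiable ℝ (fun y : ℝ => pw (s i) (y + 1)) :=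
            fun y => (hasDerivAt_pw (hg.1 i) y).differentiableAt
          exact hd.continuous
        exact (this.mul continuous_const).neg
      · exact hSp.mul_left C
      · intro i x hx
        rw [Real.norm_eq_abs, abs_of_nonneg (gd_nonneg (hg.1 i) (le_of_lt (hg.2.1 i)))]
        exact gd_le (hg.1 i) (le_of_lt (hg.2.1 i)) hpa (le_of_lt (mem_Ioi.mp hx))
    exact hcont.continuousAt (Ioi_mem_nhds haq)


lemma meas_support_full {μ : Measure (ℕ → ℝ)} {M : Type*} [Zero M]
    {f : (ℕ → ℝ) → M} (h : ∀ᵐ x ∂μ, f x ≠ 0) :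
    μ (Function.support f) = μ univ := by
  have hc : μ ((Function.support f)ᶜ) = 0 := by
    rw [ae_iff] at h
    have hset : (Function.support f)ᶜ = {s | ¬ f s ≠ 0} := by
      ext s; simp [Function.support]
    rw [hset]; exact h
  apply le_antisymm (measure_mono (subset_univ _))
  calc μ univ = μ (Function.support f ∪ (Function.support f)ᶜ) := by rw [union_compl_self]
    _ ≤ μ (Function.support f) + μ ((Function.support f)ᶜ) := measure_union_le _ _
    _ = μ (Function.support f) := by rw [hc, add_zero]

lemma exists_neg_point {ν : Measure (ℕ → ℝ)} (hν : IsDislocation ν) [IsFiniteMeasure ν]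
    (hν0 : ν ≠ 0) :
    ∃ q : ℝ, 0 < q ∧ q ≤ 1 ∧ (ν univ).toReal < ∫ s, ∑' i, uu q (s i) ∂ν := by
  classical
  set w : (ℕ → ℝ) → ℝ≥0∞ := fun s => ∑' i, ENNReal.ofReal (s i * (-Real.log (s i))) with hw
  have meas_w : Measurable w :=
    Measurable.ennreal_tsum fun i => ENNReal.measurable_ofReal.comp
      ((measurable_pi_apply i).mul ((Real.measurable_log.comp (measurable_pi_apply i)).neg))
  have base : ∀ᵐ s ∂ν, eS (uu 0) s = 1 + w s := by
    filter_upwards [good_ae hν] with s hg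
    have hterm : ∀ i, ENNReal.ofReal (uu 0 (s i))
        = ENNReal.ofReal (s i) + ENNReal.ofReal (s i * (-Real.log (s i))) := by
      intro i
      have hx0 := hg.1 i
      have hlog : Real.log (s i) ≤ 0 := by
        rcases eq_or_lt_of_le hx0 with h0 | h0
        · simp [← h0]
        · exact Real.log_nonpos (le_of_lt h0) (le_of_lt (hg.2.1 i))
      have huv : uu 0 (s i) = s i + s i * (-Real.log (s i)) := by
        rw [uu, show (0:ℝ) + 1 = 1 by norm_num, pw_one _ hx0]; ring
      rw [huv, ENNReal.ofReal_add hx0 (mul_nonneg hx0 (by linarith))]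
    rw [eS]
    calc ∑' i, ENNReal.ofReal (uu 0 (s i))
        = ∑' i, (ENNReal.ofReal (s i) + ENNReal.ofReal (s i * (-Real.log (s i)))) := by
          congr 1; funext i; exact hterm i
      _ = (∑' i, ENNReal.ofReal (s i)) + w s := ENNReal.tsum_add
      _ = 1 + w s := by
          rw [← ofReal_tsum_eq hg.1 hg.2.2.1, hg.2.2.2.1.tsum_eq, ENNReal.ofReal_one]
  have hwpos : 0 < ∫⁻ s, w s ∂ν := by
    rw [lintegral_pos_iff_support meas_w]
    have hne : ∀ᵐ s ∂ν, w s ≠ 0 := by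
      filter_upwards [good_ae hν] with s hg
      have h0 : 0 < ENNReal.ofReal (s 0 * (-Real.log (s 0))) := by
        apply ENNReal.ofReal_pos.mpr
        have hlog : Real.log (s 0) < 0 := Real.log_neg hg.2.2.2.2 (hg.2.1 0)
        have := hg.2.2.2.2
        nlinarith
      have hle : ENNReal.ofReal (s 0 * (-Real.log (s 0))) ≤ w s := ENNReal.le_tsum 0
      exact ne_of_gt (lt_of_lt_of_le h0 hle)
    rw [meas_support_full hne]
    exact Measure.measure_univ_pos.mpr hν0
  set Q : ℕ → ℝ := fun n => 1 / ((n : ℝ) + 1) with hQ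
  have hQpos : ∀ n, 0 < Q n := fun n => by positivity
  have hQle1 : ∀ n, Q n ≤ 1 := fun n => by
    rw [hQ]
    rw [div_le_one (by positivity)]
    simp [Nat.cast_nonneg]
  have hQtend : Tendsto Q atTop (𝓝 0) := tendsto_one_div_add_atTop_nhds_zero_nat
  have hliminf : ∫⁻ s, eS (uu 0) s ∂ν
      ≤ Filter.atTop.liminf (fun n => ∫⁻ s, eS (uu (Q n)) s ∂ν) := by
    calc ∫⁻ s, eS (uu 0) s ∂ν
        ≤ ∫⁻ s, Filter.atTop.liminf (fun n => eS (uu (Q n)) s) ∂ν := by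
          apply lintegral_mono_ae
          filter_upwards [good_ae hν] with s hg
          rw [eS, ENNReal.tsum_eq_iSup_sum]
          apply iSup_le
          intro F
          have hconv : Tendsto (fun n => ∑ i ∈ F, ENNReal.ofReal (uu (Q n) (s i))) atTop
              (𝓝 (∑ i ∈ F, ENNReal.ofReal (uu 0 (s i)))) := by
            apply tendsto_finset_sum
            intro i _
            exact (ENNReal.continuous_ofReal.tendsto _).comp
              (((continuous_uu (hg.1 i)).tendsto 0).comp hQtend)
          calc ∑ i ∈ F, ENNReal.ofReal (uu 0 (s i))
              = Filter.atTop.liminf (fun n => ∑ i ∈ F, ENNReal.ofReal (uu (Q n) (s i))) :=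
                (hconv.liminf_eq).symm
            _ ≤ Filter.atTop.liminf (fun n => eS (uu (Q n)) s) :=
                Filter.liminf_le_liminf (Eventually.of_forall fun n =>
                  Summable.sum_le_tsum F (fun i _ => zero_le) ENNReal.summable)
      _ ≤ _ := lintegral_liminf_le (fun n => meas_eS (meas_uu (Q n)))
  have hlt : ν univ < Filter.atTop.liminf (fun n => ∫⁻ s, eS (uu (Q n)) s ∂ν) := by
    have h1 : ∫⁻ s, eS (uu 0) s ∂ν = ν univ + ∫⁻ s, w s ∂ν := by
      rw [lintegral_congr_ae base, lintegral_add_left measurable_const, lintegral_one]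
    calc ν univ < ν univ + ∫⁻ s, w s ∂ν :=
          ENNReal.lt_add_right (measure_ne_top ν univ) (ne_of_gt hwpos)
      _ = ∫⁻ s, eS (uu 0) s ∂ν := h1.symm
      _ ≤ _ := hliminf
  obtain ⟨n, hn⟩ := (Filter.eventually_lt_of_lt_liminf hlt).exists
  refine ⟨Q n, hQpos n, hQle1 n, ?_⟩
  have hq1 : -1 < Q n := by linarith [hQpos n]
  have hq2 : pLow ν < ((Q n : ℝ) : EReal) :=
    lt_of_le_of_lt (pLow_le_zero hν) (EReal.coe_lt_coe_iff.mpr (hQpos n))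
  have hint := integrable_tsum_uu hν hq1 hq2
  have hnn : 0 ≤ᵐ[ν] fun s => ∑' i, uu (Q n) (s i) := by
    filter_upwards [good_ae hν] with s hg
    exact tsum_nonneg fun i => uu_nonneg hq1 (hg.1 i) (le_of_lt (hg.2.1 i))
  have he : ENNReal.ofReal (∫ s, ∑' i, uu (Q n) (s i) ∂ν) = ∫⁻ s, eS (uu (Q n)) s ∂ν := by
    rw [ofReal_integral_eq_lintegral_ofReal hint hnn]
    apply lintegral_congr_ae
    obtain ⟨p, ⟨hp, _⟩, hpq, hfin⟩ := exists_p hν hq1 hq2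
    filter_upwards [good_ae hν, summable_pw_ae hν hfin] with s hg hSp
    exact ofReal_tsum_eq (fun i => uu_nonneg hq1 (hg.1 i) (le_of_lt (hg.2.1 i)))
      (summable_uu hg hSp hpq)
  have hfinal : ENNReal.ofReal ((ν univ).toReal)
      < ENNReal.ofReal (∫ s, ∑' i, uu (Q n) (s i) ∂ν) := by
    rw [he, ENNReal.ofReal_toReal (measure_ne_top ν univ)]
    exact hn
  exact (ENNReal.ofReal_lt_ofReal_iff_of_nonneg ENNReal.toReal_nonneg).mp hfinal

lemma tendsto_intU_zero {ν : Measure (ℕ → ℝ)} (hν : IsDislocation ν) [IsFiniteMeasure ν] :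
    Tendsto (fun n : ℕ => ∫ s, ∑' i, uu ((n : ℝ) + 1) (s i) ∂ν) atTop (𝓝 0) := by
  have hq1 : ∀ n : ℕ, (1:ℝ) ≤ (n : ℝ) + 1 := fun n => by
    have : (0:ℝ) ≤ (n : ℝ) := Nat.cast_nonneg n
    linarith
  have hq1' : ∀ n : ℕ, (-1:ℝ) < (n : ℝ) + 1 := fun n => by linarith [hq1 n]
  have h := tendsto_integral_of_dominated_convergence (μ := ν)
      (F := fun (n : ℕ) s => ∑' i, uu ((n : ℝ) + 1) (s i)) (f := fun _ => (0:ℝ))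
      (bound := fun _ => (2:ℝ)) ?_ ?_ ?_ ?_
  · simpa using h
  · intro n
    apply aesm_tsum (meas_uu _)
    filter_upwards [good_ae hν] with s hg i
    exact uu_nonneg (hq1' n) (hg.1 i) (le_of_lt (hg.2.1 i))
  · exact integrable_const 2
  · intro n
    filter_upwards [good_ae hν] with s hg
    have hSu : Summable (fun i => uu ((n : ℝ) + 1) (s i)) := by
      apply Summable.of_nonneg_of_le
        (fun i => uu_nonneg (hq1' n) (hg.1 i) (le_of_lt (hg.2.1 i)))
        (fun i => uu_le_two_mul (hq1 n) (hg.1 i) (le_of_lt (hg.2.1 i)))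
      exact hg.2.2.1.mul_left 2
    have h0 : 0 ≤ ∑' i, uu ((n : ℝ) + 1) (s i) :=
      tsum_nonneg fun i => uu_nonneg (hq1' n) (hg.1 i) (le_of_lt (hg.2.1 i))
    rw [Real.norm_eq_abs, abs_of_nonneg h0]
    calc ∑' i, uu ((n : ℝ) + 1) (s i) ≤ ∑' i, 2 * s i := by
          apply Summable.tsum_le_tsum ?_ hSu (hg.2.2.1.mul_left 2)
          intro i
          exact uu_le_two_mul (hq1 n) (hg.1 i) (le_of_lt (hg.2.1 i))
      _ = 2 * ∑' i, s i := tsum_mul_left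
      _ = 2 := by rw [hg.2.2.2.1.tsum_eq]; norm_num
  · filter_upwards [good_ae hν] with s hg
    have h := tendsto_tsum_of_dominated_convergence (𝓕 := (atTop : Filter ℕ))
      (f := fun n k => uu ((n : ℝ) + 1) (s k)) (g := fun _ => (0:ℝ))
      (bound := fun k => 2 * s k) (hg.2.2.1.mul_left 2)
      (fun k => tendsto_uu_atTop (hg.1 k) (hg.2.1 k)) ?_
    · simpa using h
    · apply Eventually.of_forall
      intro n k
      rw [Real.norm_eq_abs,
        abs_of_nonneg (uu_nonneg (hq1' n) (hg.1 k) (le_of_lt (hg.2.1 k)))]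
      exact uu_le_two_mul (hq1 n) (hg.1 k) (le_of_lt (hg.2.1 k))

/-- Assume `ν` finite and nonzero. Then `Φ` is differentiable on
`J := (max(p̲, -1), ∞)`, the equation `Φ(q) = (q+1)Φ'(q)` has a unique solution
`p̄` in `J`, this solution satisfies `p̄ > 0`, and for every `q ∈ J` one has
`Φ(q) - (q+1)Φ'(q) < 0 ↔ q < p̄`. -/
theorem pbar_exists_unique (ν : Measure (ℕ → ℝ)) (hν : IsDislocation ν)
    [IsFiniteMeasure ν] (hν0 : ν ≠ 0) :
    (∀ q : ℝ, -1 < q → pLow ν < (q : EReal) → DifferentiableAt ℝ (Phi ν) q) ∧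
      ∃ pbar : ℝ, (-1 < pbar ∧ pLow ν < (pbar : EReal)) ∧
        Phi ν pbar = (pbar + 1) * deriv (Phi ν) pbar ∧
        0 < pbar ∧
        ∀ q : ℝ, -1 < q → pLow ν < (q : EReal) →
          (Phi ν q = (q + 1) * deriv (Phi ν) q → q = pbar) ∧
          (Phi ν q - (q + 1) * deriv (Phi ν) q < 0 ↔ q < pbar) := by
  -- basic facts
  have hm : 0 < (ν univ).toReal :=
    ENNReal.toReal_pos (by rwa [Ne, Measure.measure_univ_eq_zero]) (measure_ne_top ν univ)
  -- differentiability
  have hdiff : ∀ q : ℝ, -1 < q → pLow ν < (q : EReal) → DifferentiableAt ℝ (Phi ν) q :=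
    fun q h1 h2 => (phi_deriv hν h1 h2).1.differentiableAt
  refine ⟨hdiff, ?_⟩
  -- the function G
  set G : ℝ → ℝ := fun q => Phi ν q - (q + 1) * deriv (Phi ν) q with hG
  have hGeq : ∀ q : ℝ, -1 < q → pLow ν < (q : EReal) →
      G q = (ν univ).toReal - ∫ s, ∑' i, uu q (s i) ∂ν := fun q h1 h2 => G_eq hν h1 h2
  have hmono : ∀ q1 q2 : ℝ, (-1 < q1 ∧ pLow ν < (q1 : EReal)) →
      (-1 < q2 ∧ pLow ν < (q2 : EReal)) → q1 < q2 → G q1 < G q2 := by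
    intro q1 q2 h1 h2 hlt
    rw [hGeq q1 h1.1 h1.2, hGeq q2 h2.1 h2.2]
    have := intU_strict_anti hν hν0 h1.1 h1.2 h2.1 h2.2 hlt
    linarith
  have hcont : ∀ q : ℝ, -1 < q → pLow ν < (q : EReal) → ContinuousAt G q := by
    intro q h1 h2
    have hP : ContinuousAt (Phi ν) q := (hdiff q h1 h2).continuousAt
    have hD : ContinuousAt (deriv (Phi ν)) q := by
      apply ContinuousAt.congr (phiD_cont hν h1 h2)
      filter_upwards [J_nhds hν h1 h2] with q' hq'
      exact ((phi_deriv hν hq'.1 hq'.2).1.deriv).symm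
    exact hP.sub ((continuousAt_id.add continuousAt_const).mul hD)
  -- negative point
  obtain ⟨q1, hq1pos, hq1le1, hq1lt⟩ := exists_neg_point hν hν0
  have hq1J : -1 < q1 ∧ pLow ν < (q1 : EReal) :=
    ⟨by linarith, lt_of_le_of_lt (pLow_le_zero hν) (EReal.coe_lt_coe_iff.mpr hq1pos)⟩
  have hGq1 : G q1 < 0 := by
    rw [hGeq q1 hq1J.1 hq1J.2]; linarith
  -- positive point
  have hev := (tendsto_intU_zero hν).eventually_lt_const hm
  obtain ⟨n, hn, hn1⟩ := (hev.and (eventually_ge_atTop 1)).exists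
  set q2 : ℝ := (n : ℝ) + 1 with hq2def
  have hq2ge2 : (2:ℝ) ≤ q2 := by
    rw [hq2def]
    have : (1:ℝ) ≤ (n : ℝ) := by exact_mod_cast hn1
    linarith
  have hq2J : -1 < q2 ∧ pLow ν < (q2 : EReal) :=
    ⟨by linarith, lt_of_le_of_lt (pLow_le_zero hν)
      (EReal.coe_lt_coe_iff.mpr (by linarith : (0:ℝ) < q2))⟩
  have hGq2 : 0 < G q2 := by
    rw [hGeq q2 hq2J.1 hq2J.2]; linarith
  have hq1q2 : q1 ≤ q2 := by linarith
  -- membership of Icc points in J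
  have hIccJ : ∀ x ∈ Icc q1 q2, -1 < x ∧ pLow ν < (x : EReal) := by
    intro x hx
    have hx1 : q1 ≤ x := hx.1
    exact ⟨by linarith, lt_of_le_of_lt (pLow_le_zero hν)
      (EReal.coe_lt_coe_iff.mpr (by linarith : (0:ℝ) < x))⟩
  -- IVT
  have hGcont : ContinuousOn G (Icc q1 q2) := by
    intro x hx
    exact (hcont x (hIccJ x hx).1 (hIccJ x hx).2).continuousWithinAt
  have h0mem : (0:ℝ) ∈ Icc (G q1) (G q2) := ⟨le_of_lt hGq1, le_of_lt hGq2⟩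
  obtain ⟨c, hcmem, hGc⟩ := intermediate_value_Icc hq1q2 hGcont h0mem
  have hcJ : -1 < c ∧ pLow ν < (c : EReal) := hIccJ c hcmem
  have hcq1 : q1 < c := by
    rcases lt_trichotomy c q1 with h | h | h
    · exfalso
      have := hmono c q1 hcJ hq1J h
      rw [hGc] at this
      linarith
    · exfalso; rw [← h, hGc] at hGq1; linarith
    · exact h
  have hcpos : 0 < c := lt_trans hq1pos hcq1
  refine ⟨c, hcJ, ?_, hcpos, ?_⟩
  · -- Phi c = (c+1) deriv
    have : Phi ν c - (c + 1) * deriv (Phi ν) c = 0 := hGc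
    linarith
  · intro q h1 h2
    constructor
    · intro heq
      have hGq : G q = 0 := by rw [hG]; simp only; linarith
      rcases lt_trichotomy q c with h | h | h
      · exfalso
        have := hmono q c ⟨h1, h2⟩ hcJ h
        rw [hGq, hGc] at this
        linarith
      · exact h
      · exfalso
        have := hmono c q hcJ ⟨h1, h2⟩ h
        rw [hGq, hGc] at this
        linarith
    · constructor
      · intro hneg
        by_contra hcq
        push_neg at hcq
        rcases eq_or_lt_of_le hcq with h | h
        · have hGq : G q < 0 := hneg
          rw [h] at hGc
          rw [hGc] at hGq
          exact absurd hGq (lt_irrefl 0)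
        · have := hmono c q hcJ ⟨h1, h2⟩ h
          rw [hGc] at this
          have hq' : G q < 0 := hneg
          linarith
      · intro hlt
        have := hmono q c ⟨h1, h2⟩ hcJ hlt
        rw [hGc] at this
        exact this
end
end
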